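/- arXiv:1606.03320 — 2 statements merged into one kernel-verified Lean document; each statement's English description precedes it below -/
import Mathlib

section
/- Let G be a group and H' ⊆ H ⊆ G subgroups of finite index. Suppose e : G/H' → H' is a function such that e(ρ) depends only on the image of ρ in G/H (i.e. e(ρ) = e(ρ') whenever ρH = ρ'H). Let α ∈ G # H, inducing a permutation of G/H'. Then for any subset Φ ⊆ G/H' mapping bijectively to G/H under the natural projection, the set αΦ = {αφ : φ ∈ Φ} also maps bijectively to G/H, and consequently in any abelian group A and any homomorphism f : H' → A one has ∏_{φ∈Φ} f(e(αφ))^{-1} f(e(φ)) = 1. -/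
section Plectic

variable {G : Type*} [Group G]

/-- The plectic group `G # H`: bijections of `G` commuting with right translation by `H`. -/
def plectic (G : Type*) [Group G] (H : Subgroup G) : Subgroup (Equiv.Perm G) where
  carrier := {α : Equiv.Perm G | ∀ (g : G), ∀ h ∈ H, α (g * h) = α g * h}
  one_mem' := fun _ _ _ => rfl
  mul_mem' := by
    intro a b ha hb g h hh
    simp only [Equiv.Perm.mul_apply, hb g h hh, ha (b g) h hh]
  inv_mem' := by
    intro a ha g h hh
    apply a.injective
    rw [ha (a⁻¹ g) h hh, Equiv.Perm.coe_inv, Equiv.apply_symm_apply, Equiv.apply_symm_apply]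

theorem mem_plectic {H : Subgroup G} {α : Equiv.Perm G} :
    α ∈ plectic G H ↔ ∀ (g : G), ∀ h ∈ H, α (g * h) = α g * h := Iff.rfl

theorem plectic_apply {H : Subgroup G} (α : plectic G H) (g : G) {h : G} (hh : h ∈ H) :
    (α : Equiv.Perm G) (g * h) = (α : Equiv.Perm G) g * h := α.2 g h hh

/-- The permutation of left cosets `G ⧸ H` induced by an element of the plectic group. -/
def inducedPerm {H : Subgroup G} (α : plectic G H) : Equiv.Perm (G ⧸ H) where
  toFun := Quotient.map' (⇑(α : Equiv.Perm G)) (by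
    intro a b hab
    rw [QuotientGroup.leftRel_apply] at hab ⊢
    have h1 := plectic_apply α a hab
    rw [mul_inv_cancel_left] at h1
    rw [h1, inv_mul_cancel_left]
    exact hab)
  invFun := Quotient.map' (⇑((α⁻¹ : plectic G H) : Equiv.Perm G)) (by
    intro a b hab
    rw [QuotientGroup.leftRel_apply] at hab ⊢
    have h1 := plectic_apply α⁻¹ a hab
    rw [mul_inv_cancel_left] at h1
    rw [h1, inv_mul_cancel_left]
    exact hab)
  left_inv := by
    intro q
    induction q using Quotient.inductionOn' with
    | h g => simp [Quotient.map'_mk'']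
  right_inv := by
    intro q
    induction q using Quotient.inductionOn' with
    | h g => simp [Quotient.map'_mk'']

theorem inducedPerm_mk {H : Subgroup G} (α : plectic G H) (g : G) :
    inducedPerm α (QuotientGroup.mk g) = QuotientGroup.mk ((α : Equiv.Perm G) g) := rfl

/-- `h_x(α) = s_{π(α)(x)}⁻¹ · α(s_x)`. -/
def hcomp {H : Subgroup G} (α : plectic G H) (s : G ⧸ H → G) (x : G ⧸ H) : G :=
  (s (inducedPerm α x))⁻¹ * (α : Equiv.Perm G) (s x)

theorem hcomp_mem {H : Subgroup G} (α : plectic G H) {s : G ⧸ H → G}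
    (hs : ∀ x, QuotientGroup.mk (s x) = x) (x : G ⧸ H) : hcomp α s x ∈ H := by
  simp only [hcomp]
  rw [← QuotientGroup.eq, hs, ← inducedPerm_mk α (s x), hs]

/-- The map `ρ_s` to (the underlying set of) the wreath product. -/
def rhoPair {H : Subgroup G} (s : G ⧸ H → G) (hs : ∀ x, QuotientGroup.mk (s x) = x)
    (α : plectic G H) : Equiv.Perm (G ⧸ H) × ((G ⧸ H) → H) :=
  (inducedPerm α, fun x => ⟨hcomp α s x, hcomp_mem α hs x⟩)

end Plectic

/-- The natural projection `G ⧸ H' → G ⧸ H` for `H' ≤ H`. -/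
def cosetProj {G : Type*} [Group G] (H H' : Subgroup G) (hle : H' ≤ H) :
    G ⧸ H' → G ⧸ H :=
  Quotient.map' id (by
    intro a b hab
    rw [QuotientGroup.leftRel_apply] at hab ⊢
    exact hle hab)

/-- If `e : G/H' → H'` depends only on the image in `G/H` and `α ∈ G # H`, then for any
`Φ ⊆ G/H'` mapping bijectively onto `G/H`, so does `αΦ`, and consequently for any
homomorphism `f` from `H'` to an abelian group, `∏_{φ∈Φ} f(e(αφ))⁻¹ f(e(φ)) = 1`. -/
theorem plectic_halfTransfer_independence (G : Type*) [Group G] (H H' : Subgroup G)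
    (hle : H' ≤ H) [H.FiniteIndex] [H'.FiniteIndex]
    (e : G ⧸ H' → H')
    (hee : ∀ ρ ρ' : G ⧸ H', cosetProj H H' hle ρ = cosetProj H H' hle ρ' → e ρ = e ρ')
    (α : plectic G H) (β : plectic G H') (hβ : (β : Equiv.Perm G) = (α : Equiv.Perm G))
    (Φ : Set (G ⧸ H')) (hΦ : Set.BijOn (cosetProj H H' hle) Φ Set.univ) :
    Set.BijOn (cosetProj H H' hle) ((inducedPerm β) '' Φ) Set.univ ∧
    ∀ (A : Type*) [CommGroup A] (f : H' →* A),
      (∏ᶠ φ ∈ Φ, ((f (e (inducedPerm β φ)))⁻¹ * f (e φ))) = 1 := by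

  classical
  -- projection commutes with the induced permutations
  have hcomm : ∀ ρ : G ⧸ H', cosetProj H H' hle (inducedPerm β ρ)
      = inducedPerm α (cosetProj H H' hle ρ) := by
    intro ρ
    induction ρ using Quotient.inductionOn' with
    | h g =>
      show cosetProj H H' hle (QuotientGroup.mk ((β : Equiv.Perm G) g))
          = inducedPerm α (cosetProj H H' hle (QuotientGroup.mk g))
      rw [hβ]
      rfl
  have hβbij : Set.BijOn (inducedPerm β) Φ ((inducedPerm β) '' Φ) :=
    (Set.injOn_of_injective (inducedPerm β).injective).bijOn_image
  -- BijOn of proj ∘ β on Φ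
  have hcompbij : Set.BijOn (fun φ => cosetProj H H' hle ((inducedPerm β) φ)) Φ Set.univ := by
    have h1 : Set.BijOn (inducedPerm α) Set.univ Set.univ :=
      (inducedPerm α).bijective.bijOn_univ
    have h2 := h1.comp hΦ
    exact h2.congr (fun φ _ => (hcomm φ).symm)
  have hbij2 : Set.BijOn (cosetProj H H' hle) ((inducedPerm β) '' Φ) Set.univ := by
    have hinv : Set.BijOn (inducedPerm β).symm ((inducedPerm β) '' Φ) Φ :=
      Set.BijOn.symm ⟨fun x _ => (inducedPerm β).apply_symm_apply x,
        fun x _ => (inducedPerm β).symm_apply_apply x⟩ hβbij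
    have := hcompbij.comp hinv
    refine this.congr ?_
    intro ψ _
    show cosetProj H H' hle ((inducedPerm β) ((inducedPerm β).symm ψ)) = _
    rw [(inducedPerm β).apply_symm_apply]
  refine ⟨hbij2, ?_⟩
  intro A _ f
  -- e factors through G ⧸ H
  set ebar : G ⧸ H → H' := fun x => e (QuotientGroup.mk (Quotient.out x)) with hebar
  have hfac : ∀ ρ : G ⧸ H', e ρ = ebar (cosetProj H H' hle ρ) := by
    intro ρ
    apply hee
    induction ρ using Quotient.inductionOn' with
    | h g =>
      show QuotientGroup.mk g = cosetProj H H' hle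
          (QuotientGroup.mk (Quotient.out (cosetProj H H' hle (QuotientGroup.mk g))))
      have : ∀ x : G ⧸ H, cosetProj H H' hle (QuotientGroup.mk (Quotient.out x)) = x := by
        intro x
        show QuotientGroup.mk (Quotient.out x) = x
        exact QuotientGroup.out_eq' x
      rw [this]
      rfl
  have hΦfin : Φ.Finite := by
    have : (cosetProj H H' hle '' Φ).Finite := Set.toFinite _
    exact Set.Finite.of_finite_image this hΦ.injOn
  -- both products equal ∏ over univ of f ∘ ebar
  have hA : ∏ᶠ φ ∈ Φ, f (e (inducedPerm β φ)) = ∏ᶠ x ∈ (Set.univ : Set (G ⧸ H)), f (ebar x) := by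
    refine finprod_mem_eq_of_bijOn _ hcompbij ?_
    intro φ _
    rw [hfac (inducedPerm β φ)]
  have hB : ∏ᶠ φ ∈ Φ, f (e φ) = ∏ᶠ x ∈ (Set.univ : Set (G ⧸ H)), f (ebar x) := by
    refine finprod_mem_eq_of_bijOn _ hΦ ?_
    intro φ _
    rw [hfac φ]
  calc ∏ᶠ φ ∈ Φ, ((f (e (inducedPerm β φ)))⁻¹ * f (e φ))
      = (∏ᶠ φ ∈ Φ, (f (e (inducedPerm β φ)))⁻¹) * ∏ᶠ φ ∈ Φ, f (e φ) :=
        finprod_mem_mul_distrib hΦfin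
    _ = (∏ᶠ φ ∈ Φ, f (e (inducedPerm β φ)))⁻¹ * ∏ᶠ φ ∈ Φ, f (e φ) := by
        rw [finprod_mem_inv_distrib _ hΦfin]
    _ = 1 := by rw [hA, hB, inv_mul_cancel]
end

section
/- Let F ⊆ k be number fields with k/ℚ Galois, and set G = Gal(k/ℚ), H = Gal(k/F), X = G/H. Then a choice of coset representatives s = (s_x) for H in G determines an isomorphism of F-algebras F ⊗_ℚ k ≅ ∏_{x∈X} k (sending a⊗b to (s_x(a)·b)_x after identifying X with embeddings F → k), and the induced composite isomorphism Aut_F(F ⊗_ℚ k) ≅ Sym(X) ⋉ H^X ≅ G # H is independent of the choice of s. -/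
section PiAut
variable {R k : Type*} [Field R] [Field k] [Algebra R k]
variable {ι : Type*} [Fintype ι] [DecidableEq ι]

theorem algHom_pi_exists (p : (ι → k) →ₐ[R] k) :
    ∃ (x : ι) (σ : k →ₐ[R] k), ∀ v : ι → k, p v = σ (v x) := by
  have hsingle_mul : ∀ x : ι, (Pi.single x 1 : ι → k) * Pi.single x 1 = Pi.single x 1 := by
    intro x; funext y; by_cases hy : y = x <;> simp [Pi.single_apply, hy]
  have hsum : (∑ x : ι, Pi.single x (1:k)) = (1 : ι → k) := by
    funext y
    simp [Finset.sum_apply, Pi.single_apply]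
  have h1 : ∑ x : ι, p (Pi.single x 1) = 1 := by rw [← map_sum, hsum, map_one]
  have hidem : ∀ x : ι, p (Pi.single x 1) = 0 ∨ p (Pi.single x 1) = 1 := by
    intro x
    have h : p (Pi.single x 1) * p (Pi.single x 1) = p (Pi.single x 1) := by
      rw [← map_mul, hsingle_mul]
    have h0 : p (Pi.single x 1) * (p (Pi.single x 1) - 1) = 0 := by linear_combination h
    rcases mul_eq_zero.mp h0 with h' | h'
    · exact Or.inl h'
    · exact Or.inr (sub_eq_zero.mp h')
  have hex : ∃ x : ι, p (Pi.single x 1) = 1 := by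
    by_contra hc
    push_neg at hc
    have : ∀ x : ι, p (Pi.single x 1) = 0 := fun x => (hidem x).resolve_right (hc x)
    rw [Finset.sum_congr rfl (fun x _ => this x)] at h1
    simp at h1
  obtain ⟨x, hx⟩ := hex
  refine ⟨x, p.comp (Pi.constAlgHom R ι k), fun v => ?_⟩
  have hv : v * Pi.single x 1 = (Function.const ι (v x)) * Pi.single x 1 := by
    funext y; by_cases hy : y = x <;> simp [Pi.single_apply, hy]
  calc p v = p v * p (Pi.single x 1) := by rw [hx, mul_one]
    _ = p (v * Pi.single x 1) := (map_mul p _ _).symm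
    _ = p ((Function.const ι (v x)) * Pi.single x 1) := by rw [hv]
    _ = p (Function.const ι (v x)) * p (Pi.single x 1) := map_mul p _ _
    _ = (p.comp (Pi.constAlgHom R ι k)) (v x) := by rw [hx, mul_one]; rfl

theorem autPi_existsUnique [FiniteDimensional R k] (Φ : (ι → k) ≃ₐ[R] (ι → k)) :
    ∃! p : Equiv.Perm ι × (ι → (k ≃ₐ[R] k)),
      ∀ (v : ι → k) (x : ι), Φ v (p.1 x) = p.2 x (v x) := by
  choose y σ hyσ using fun z =>
    algHom_pi_exists ((Pi.evalAlgHom R (fun _ => k) z).comp Φ.toAlgHom)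
  choose y' σ' hyσ' using fun z =>
    algHom_pi_exists ((Pi.evalAlgHom R (fun _ => k) z).comp Φ.symm.toAlgHom)
  have hΦ : ∀ (z : ι) (v : ι → k), Φ v z = σ z (v (y z)) := fun z v => hyσ z v
  have hΦ' : ∀ (z : ι) (v : ι → k), Φ.symm v z = σ' z (v (y' z)) := fun z v => hyσ' z v
  have hyy' : ∀ z, y (y' z) = z := by
    intro z
    by_contra hne
    have h1 : (Pi.single z 1 : ι → k) z = 1 := by simp
    have : (1:k) = σ' z (σ (y' z) ((Pi.single z 1 : ι → k) (y (y' z)))) := by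
      rw [← hΦ, ← hΦ', Φ.symm_apply_apply, h1]
    rw [Pi.single_eq_of_ne hne, map_zero, map_zero] at this
    exact one_ne_zero this
  have hy'y : ∀ z, y' (y z) = z := by
    intro z
    by_contra hne
    have h1 : (Pi.single z 1 : ι → k) z = 1 := by simp
    have : (1:k) = σ z (σ' (y z) ((Pi.single z 1 : ι → k) (y' (y z)))) := by
      rw [← hΦ', ← hΦ, Φ.apply_symm_apply, h1]
    rw [Pi.single_eq_of_ne hne, map_zero, map_zero] at this
    exact one_ne_zero this
  set π : Equiv.Perm ι := ⟨y', y, hyy', hy'y⟩ with hπ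
  set τ : ι → (k ≃ₐ[R] k) := fun x =>
    AlgEquiv.ofBijective (σ (y' x)) (σ (y' x)).bijective with hτ
  have hchar : ∀ (v : ι → k) (x : ι), Φ v (π x) = τ x (v x) := by
    intro v x
    show Φ v (y' x) = σ (y' x) (v x)
    rw [hΦ (y' x) v, hyy']
  refine ⟨(π, τ), hchar, ?_⟩
  rintro ⟨π₂, τ₂⟩ hq
  have hperm : ∀ x, π₂ x = π x := by
    intro x
    by_contra hne
    have h1 : Φ (Pi.single x (1:k)) (π x) = 1 := by rw [hchar]; simp
    have hw : π₂.symm (π x) ≠ x := by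
      intro h; exact hne ((Equiv.symm_apply_eq π₂).mp h).symm
    have h2 : Φ (Pi.single x (1:k)) (π x) = 0 := by
      have := hq (Pi.single x (1:k)) (π₂.symm (π x))
      rw [π₂.apply_symm_apply] at this
      rw [this, Pi.single_eq_of_ne hw, map_zero]
    rw [h1] at h2; exact one_ne_zero h2
  have hπeq : π₂ = π := Equiv.ext hperm
  refine Prod.ext hπeq (funext fun x => ?_)
  refine AlgEquiv.ext fun c => ?_
  have h1 : Φ (Pi.single x c) (π x) = τ₂ x c := by
    rw [← hperm x, hq]; simp
  have h2 : Φ (Pi.single x c) (π x) = τ x c := by rw [hchar]; simp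
  rw [← h1, h2]

end PiAut

open scoped TensorProduct

section TensorIso
variable (k : Type*) [Field k] [NumberField k] [IsGalois ℚ k] (F : IntermediateField ℚ k)

/-- The embedding `F → k` attached to a coset of the fixing subgroup. -/
noncomputable def emb (x : (k ≃ₐ[ℚ] k) ⧸ F.fixingSubgroup) : F →ₐ[ℚ] k :=
  (Quotient.out x).toAlgHom.comp F.val

theorem emb_eq {g : k ≃ₐ[ℚ] k} {x : (k ≃ₐ[ℚ] k) ⧸ F.fixingSubgroup}
    (h : (QuotientGroup.mk g : (k ≃ₐ[ℚ] k) ⧸ F.fixingSubgroup) = x) (a : F) :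
    emb k F x a = g (a : k) := by
  have h' : (Quotient.out x)⁻¹ * g ∈ F.fixingSubgroup := by
    rw [← QuotientGroup.eq, QuotientGroup.out_eq']
    exact h.symm
  have h2 := (IntermediateField.mem_fixingSubgroup_iff F _).mp h' (a : k) a.2
  calc emb k F x a = (Quotient.out x) (a : k) := rfl
    _ = (Quotient.out x) (((Quotient.out x)⁻¹ * g) (a : k)) := by rw [h2]
    _ = ((Quotient.out x) * ((Quotient.out x)⁻¹ * g)) (a : k) := rfl
    _ = g (a : k) := by rw [← mul_assoc, mul_inv_cancel, one_mul]

theorem emb_inj : Function.Injective (fun x : (k ≃ₐ[ℚ] k) ⧸ F.fixingSubgroup =>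
    (emb k F x : F →* k)) := by
  intro x y hxy
  rw [← QuotientGroup.out_eq' x, ← QuotientGroup.out_eq' y, QuotientGroup.eq]
  rw [IntermediateField.mem_fixingSubgroup_iff]
  intro a ha
  have h := DFunLike.congr_fun hxy (⟨a, ha⟩ : F)
  have h' : (Quotient.out x) a = (Quotient.out y) a := h
  show ((Quotient.out x)⁻¹ * Quotient.out y) a = a
  calc ((Quotient.out x)⁻¹ * Quotient.out y) a
      = (Quotient.out x)⁻¹ ((Quotient.out y) a) := rfl
    _ = (Quotient.out x)⁻¹ ((Quotient.out x) a) := by rw [h']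
    _ = ((Quotient.out x)⁻¹ * Quotient.out x) a := rfl
    _ = a := by rw [inv_mul_cancel]; rfl

theorem cardX : Nat.card ((k ≃ₐ[ℚ] k) ⧸ F.fixingSubgroup) = Module.finrank ℚ F := by
  have h1 : Nat.card (k ≃ₐ[ℚ] k) = Module.finrank ℚ k := by
    rw [IsGalois.card_aut_eq_finrank]
  have h2 : Nat.card F.fixingSubgroup = Module.finrank F k := by
    rw [Nat.card_congr (IntermediateField.fixingSubgroupEquiv F).toEquiv,
      IsGalois.card_aut_eq_finrank]
  have h3 := Subgroup.card_eq_card_quotient_mul_card_subgroup F.fixingSubgroup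
  have h4 : Module.finrank ℚ F * Module.finrank F k = Module.finrank ℚ k :=
    Module.finrank_mul_finrank ℚ F k
  have h5 : 0 < Module.finrank F k := Module.finrank_pos
  apply Nat.eq_of_mul_eq_mul_right h5
  calc Nat.card ((k ≃ₐ[ℚ] k) ⧸ F.fixingSubgroup) * Module.finrank F k
      = Nat.card ((k ≃ₐ[ℚ] k) ⧸ F.fixingSubgroup) * Nat.card F.fixingSubgroup := by rw [h2]
    _ = Nat.card (k ≃ₐ[ℚ] k) := h3.symm
    _ = Module.finrank ℚ k := h1
    _ = Module.finrank ℚ F * Module.finrank F k := h4.symm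

/-- The `k`-algebra homomorphism `k ⊗ F → ∏ₓ k`. -/
noncomputable def Ek : k ⊗[ℚ] F →ₐ[k] ((k ≃ₐ[ℚ] k) ⧸ F.fixingSubgroup → k) :=
  Pi.algHom _ _ fun x =>
    Algebra.TensorProduct.lift (AlgHom.id k k) (emb k F x) fun _ _ => Commute.all _ _

theorem Ek_tmul (b : k) (a : F) (x : (k ≃ₐ[ℚ] k) ⧸ F.fixingSubgroup) :
    Ek k F (b ⊗ₜ[ℚ] a) x = b * emb k F x a := by
  simp [Ek, Algebra.TensorProduct.lift_tmul]

theorem Ek_bijective : Function.Bijective (Ek k F) := by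
  classical
  letI : Fintype ((k ≃ₐ[ℚ] k) ⧸ F.fixingSubgroup) := Fintype.ofFinite _
  set n := Module.finrank ℚ F with hn
  have hcard : Fintype.card ((k ≃ₐ[ℚ] k) ⧸ F.fixingSubgroup) = n := by
    rw [← Nat.card_eq_fintype_card, cardX]
  set eX : ((k ≃ₐ[ℚ] k) ⧸ F.fixingSubgroup) ≃ Fin n := Fintype.equivFinOfCardEq hcard with heX
  set bF : Module.Basis (Fin n) ℚ F := Module.finBasis ℚ F with hbF
  set B : Module.Basis (Fin n) k (k ⊗[ℚ] F) := Algebra.TensorProduct.basis k bF with hB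
  set C : Module.Basis (Fin n) k (((k ≃ₐ[ℚ] k) ⧸ F.fixingSubgroup) → k) :=
    (Pi.basisFun k _).reindex eX with hC
  set M := LinearMap.toMatrix B C (Ek k F).toLinearMap with hM
  have hMij : ∀ i j, M i j = emb k F (eX.symm i) (bF j) := by
    intro i j
    rw [hM, LinearMap.toMatrix_apply, hC, Module.Basis.repr_reindex_apply]
    rw [hB, Algebra.TensorProduct.basis_apply]
    show Ek k F ((1 : k) ⊗ₜ[ℚ] bF j) (eX.symm i) = _
    rw [Ek_tmul, one_mul]
  have hdet : M.det ≠ 0 := by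
    intro h
    obtain ⟨v, hv0, hvM⟩ := Matrix.exists_vecMul_eq_zero_iff.mpr h
    set L : F →ₗ[ℚ] k := ∑ i, v i • (emb k F (eX.symm i)).toLinearMap with hL
    have hLb : ∀ j, L (bF j) = 0 := by
      intro j
      have h0 := congrFun hvM j
      rw [Matrix.vecMul, dotProduct] at h0
      rw [hL, LinearMap.sum_apply]
      rw [show (0:k) = ∑ i, v i * M i j from h0.symm]
      refine Finset.sum_congr rfl fun i _ => ?_
      rw [LinearMap.smul_apply, smul_eq_mul, hMij]
      rfl
    have hL0 : L = 0 := bF.ext fun j => by rw [hLb j]; rfl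
    have li : LinearIndependent k fun x : (k ≃ₐ[ℚ] k) ⧸ F.fixingSubgroup =>
        ((emb k F x : F →* k) : F → k) :=
      (linearIndependent_monoidHom F k).comp _ (emb_inj k F)
    have hvall : ∀ x, v (eX x) = 0 := by
      refine Fintype.linearIndependent_iff.mp li (fun x => v (eX x)) ?_
      funext a
      have h1 : L a = 0 := by rw [hL0]; rfl
      rw [hL, LinearMap.sum_apply] at h1
      rw [Finset.sum_apply]
      simp only [Pi.smul_apply, Pi.zero_apply]
      calc ∑ x : (k ≃ₐ[ℚ] k) ⧸ F.fixingSubgroup, v (eX x) • ((emb k F x : F →* k) : F → k) a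
          = ∑ x, v (eX x) • emb k F x a := rfl
        _ = ∑ i, v i • emb k F (eX.symm i) a := by
            refine Fintype.sum_equiv eX _ _ fun x => ?_
            rw [Equiv.symm_apply_apply]
        _ = 0 := by
            rw [← h1]
            refine Finset.sum_congr rfl fun i _ => ?_
            rw [LinearMap.smul_apply]
            rfl
    apply hv0
    funext i
    have := hvall (eX.symm i)
    rwa [Equiv.apply_symm_apply] at this
  have hunit : IsUnit M.det := isUnit_iff_ne_zero.mpr hdet
  have heq : ⇑(LinearEquiv.ofIsUnitDet hunit) = ⇑(Ek k F) := by
    funext z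
    exact DFunLike.congr_fun (LinearEquiv.coe_ofIsUnitDet hunit) z
  rw [← heq]
  exact (LinearEquiv.ofIsUnitDet hunit).bijective

/-- The canonical isomorphism `F ⊗ k ≃ ∏ₓ k`. -/
noncomputable def EFk : (F ⊗[ℚ] k) ≃ₐ[ℚ] (((k ≃ₐ[ℚ] k) ⧸ F.fixingSubgroup) → k) :=
  (Algebra.TensorProduct.comm ℚ F k).trans
    ((AlgEquiv.ofBijective (Ek k F) (Ek_bijective k F)).restrictScalars ℚ)

theorem EFk_tmul (a : F) (b : k) (x : (k ≃ₐ[ℚ] k) ⧸ F.fixingSubgroup) :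
    EFk k F (a ⊗ₜ[ℚ] b) x = emb k F x a * b := by
  show Ek k F ((Algebra.TensorProduct.comm ℚ F k) (a ⊗ₜ[ℚ] b)) x = _
  rw [Algebra.TensorProduct.comm_tmul, Ek_tmul, mul_comm]

end TensorIso

/-- The reindexing algebra automorphism of a power of an algebra. -/
def permAlgEquiv {R k ι : Type*} [CommSemiring R] [Semiring k] [Algebra R k]
    (π : Equiv.Perm ι) : (ι → k) ≃ₐ[R] (ι → k) :=
  { Equiv.piCongrLeft' (fun _ => k) π with
    map_mul' := fun _ _ => rfl
    map_add' := fun _ _ => rfl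
    commutes' := fun _ => rfl }

open scoped TensorProduct

set_option maxHeartbeats 1000000
set_option synthInstance.maxHeartbeats 1000000

/-- A choice of coset representatives `s` for `Gal(k/F)` in `Gal(k/ℚ)` identifies
`F ⊗_ℚ k` with `∏_{x∈X} k` (via `a⊗b ↦ (s_x(a)·b)_x`), and the induced isomorphism
`Aut_F(F ⊗_ℚ k) ≅ G # H` is independent of the choice of `s`. -/
theorem tensor_aut_iso_plectic (k : Type*) [Field k] [NumberField k] [IsGalois ℚ k]
    (F : IntermediateField ℚ k) :
    ∃ Θ : ((F ⊗[ℚ] k) ≃ₐ[F] (F ⊗[ℚ] k)) ≃*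
        plectic (k ≃ₐ[ℚ] k) F.fixingSubgroup,
      ∀ (s : (k ≃ₐ[ℚ] k) ⧸ F.fixingSubgroup → (k ≃ₐ[ℚ] k)),
        (∀ x, QuotientGroup.mk (s x) = x) →
        ∃ e : (F ⊗[ℚ] k) ≃ₐ[ℚ] (((k ≃ₐ[ℚ] k) ⧸ F.fixingSubgroup) → k),
          (∀ (a : F) (b : k) (x : (k ≃ₐ[ℚ] k) ⧸ F.fixingSubgroup),
            e (a ⊗ₜ[ℚ] b) x = s x (a : k) * b) ∧
          ∀ (φ : (F ⊗[ℚ] k) ≃ₐ[F] (F ⊗[ℚ] k)) (v : F ⊗[ℚ] k)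
            (x : (k ≃ₐ[ℚ] k) ⧸ F.fixingSubgroup),
            e (φ v) (inducedPerm (Θ φ) x) =
              (((Θ φ : Equiv.Perm (k ≃ₐ[ℚ] k)) (s x)) * (s x)⁻¹) (e v x) := by
  classical
  letI : Fintype ((k ≃ₐ[ℚ] k) ⧸ F.fixingSubgroup) := Fintype.ofFinite _
  have hconj : ∀ (φ : (F ⊗[ℚ] k) ≃ₐ[F] (F ⊗[ℚ] k)) (v : F ⊗[ℚ] k),
      (AlgEquiv.autCongr (EFk k F)) (φ.restrictScalars ℚ) (EFk k F v) = EFk k F (φ v) := by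
    intro φ v
    show EFk k F ((φ.restrictScalars ℚ) ((EFk k F).symm (EFk k F v))) = _
    rw [(EFk k F).symm_apply_apply]
    rfl
  have hdec := fun (φ : (F ⊗[ℚ] k) ≃ₐ[F] (F ⊗[ℚ] k)) =>
    autPi_existsUnique (R := ℚ) ((AlgEquiv.autCongr (EFk k F)) (φ.restrictScalars ℚ))
  choose P hP hPu using hdec
  have hPE : ∀ φ (v : F ⊗[ℚ] k) x,
      EFk k F (φ v) ((P φ).1 x) = (P φ).2 x (EFk k F v x) := by
    intro φ v x
    rw [← hconj φ v]
    exact hP φ (EFk k F v) x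
  have hembP : ∀ φ (a : F) x, (P φ).2 x (emb k F x a) = emb k F ((P φ).1 x) a := by
    intro φ a x
    have hφa : φ (a ⊗ₜ[ℚ] (1 : k)) = a ⊗ₜ[ℚ] (1 : k) := φ.commutes a
    have h2 := hPE φ (a ⊗ₜ[ℚ] (1 : k)) x
    rw [hφa, EFk_tmul, EFk_tmul, mul_one, mul_one] at h2
    exact h2.symm
  have hcoset : ∀ φ (g : k ≃ₐ[ℚ] k),
      (QuotientGroup.mk ((P φ).2 (QuotientGroup.mk g) * g) :
        (k ≃ₐ[ℚ] k) ⧸ F.fixingSubgroup) = (P φ).1 (QuotientGroup.mk g) := by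
    intro φ g
    symm
    conv_lhs => rw [← QuotientGroup.out_eq' ((P φ).1 (QuotientGroup.mk g))]
    rw [QuotientGroup.eq, IntermediateField.mem_fixingSubgroup_iff]
    intro b hb
    have h1 : ((P φ).2 (QuotientGroup.mk g)) (g b) =
        (Quotient.out ((P φ).1 (QuotientGroup.mk g))) b := by
      have h0 := hembP φ ⟨b, hb⟩ (QuotientGroup.mk g)
      rw [emb_eq k F rfl (⟨b, hb⟩ : F)] at h0
      exact h0
    show (Quotient.out ((P φ).1 (QuotientGroup.mk g)))⁻¹
        (((P φ).2 (QuotientGroup.mk g) * g) b) = b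
    rw [AlgEquiv.mul_apply, h1, ← AlgEquiv.mul_apply, inv_mul_cancel]
    rfl
  have hΦmul : ∀ (φ ψ : (F ⊗[ℚ] k) ≃ₐ[F] (F ⊗[ℚ] k)) (v : _),
      (AlgEquiv.autCongr (EFk k F)) ((φ * ψ).restrictScalars ℚ) v =
      (AlgEquiv.autCongr (EFk k F)) (φ.restrictScalars ℚ)
        ((AlgEquiv.autCongr (EFk k F)) (ψ.restrictScalars ℚ) v) := by
    intro φ ψ v
    have h : ((φ * ψ).restrictScalars ℚ : (F ⊗[ℚ] k) ≃ₐ[ℚ] (F ⊗[ℚ] k)) =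
        (φ.restrictScalars ℚ) * (ψ.restrictScalars ℚ) := rfl
    rw [h, map_mul, AlgEquiv.mul_apply]
  have hPmul : ∀ φ ψ, P (φ * ψ) =
      ((P ψ).1.trans (P φ).1, fun x => (P φ).2 ((P ψ).1 x) * (P ψ).2 x) := by
    intro φ ψ
    refine (hPu (φ * ψ) _ ?_).symm
    intro v x
    show (AlgEquiv.autCongr (EFk k F)) ((φ * ψ).restrictScalars ℚ) v
        ((P φ).1 ((P ψ).1 x)) = ((P φ).2 ((P ψ).1 x) * (P ψ).2 x) (v x)
    rw [AlgEquiv.mul_apply, hΦmul, hP φ _ ((P ψ).1 x), hP ψ v x]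
  have hP1 : P 1 = (1, fun _ => (1 : k ≃ₐ[ℚ] k)) := by
    refine (hPu 1 _ ?_).symm
    intro v x
    have h : ((1 : (F ⊗[ℚ] k) ≃ₐ[F] (F ⊗[ℚ] k)).restrictScalars ℚ) = 1 := rfl
    show (AlgEquiv.autCongr (EFk k F))
        ((1 : (F ⊗[ℚ] k) ≃ₐ[F] (F ⊗[ℚ] k)).restrictScalars ℚ) v
        ((1 : Equiv.Perm ((k ≃ₐ[ℚ] k) ⧸ F.fixingSubgroup)) x) = (1 : k ≃ₐ[ℚ] k) (v x)
    rw [h, map_one]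
    rfl
  have hTmul : ∀ (φ ψ : (F ⊗[ℚ] k) ≃ₐ[F] (F ⊗[ℚ] k)) (g : k ≃ₐ[ℚ] k),
      (P (φ * ψ)).2 (QuotientGroup.mk g) * g =
      (P φ).2 (QuotientGroup.mk ((P ψ).2 (QuotientGroup.mk g) * g)) *
        ((P ψ).2 (QuotientGroup.mk g) * g) := by
    intro φ ψ g
    rw [hPmul, hcoset ψ g]
    show (P φ).2 ((P ψ).1 (QuotientGroup.mk g)) * (P ψ).2 (QuotientGroup.mk g) * g = _
    rw [mul_assoc]
  have hT1 : ∀ g : k ≃ₐ[ℚ] k, (P 1).2 (QuotientGroup.mk g) * g = g := by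
    intro g
    rw [hP1]
    exact one_mul g
  have hTinv : ∀ (φ : (F ⊗[ℚ] k) ≃ₐ[F] (F ⊗[ℚ] k)) (g : k ≃ₐ[ℚ] k),
      (P φ⁻¹).2 (QuotientGroup.mk ((P φ).2 (QuotientGroup.mk g) * g)) *
        ((P φ).2 (QuotientGroup.mk g) * g) = g := by
    intro φ g
    rw [← hTmul φ⁻¹ φ g, inv_mul_cancel, hT1]
  let psi : ((F ⊗[ℚ] k) ≃ₐ[F] (F ⊗[ℚ] k)) → plectic (k ≃ₐ[ℚ] k) F.fixingSubgroup := fun φ =>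
    ⟨⟨fun g => (P φ).2 (QuotientGroup.mk g) * g,
      fun g => (P φ⁻¹).2 (QuotientGroup.mk g) * g,
      fun g => hTinv φ g,
      fun g => by have h := hTinv φ⁻¹ g; rwa [inv_inv] at h⟩,
      fun g h hh => by
        show (P φ).2 (QuotientGroup.mk (g * h)) * (g * h) =
          (P φ).2 (QuotientGroup.mk g) * g * h
        rw [QuotientGroup.mk_mul_of_mem g hh, mul_assoc]⟩
  have psi_mul : ∀ φ ψ, psi (φ * ψ) = psi φ * psi ψ := by
    intro φ ψ
    apply Subtype.ext
    apply Equiv.ext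
    intro g
    exact hTmul φ ψ g
  let ΘHom := MonoidHom.mk' psi psi_mul
  have hinj : Function.Injective ΘHom := by
    rw [injective_iff_map_eq_one]
    intro φ hφ
    have hT : ∀ g : k ≃ₐ[ℚ] k, (P φ).2 (QuotientGroup.mk g) * g = g := fun g =>
      congrArg (fun α : ↥(plectic (k ≃ₐ[ℚ] k) F.fixingSubgroup) => (α : Equiv.Perm (k ≃ₐ[ℚ] k)) g) hφ
    have hτ : ∀ x, (P φ).2 x = 1 := by
      intro x
      refine QuotientGroup.induction_on x fun g => ?_
      exact mul_right_cancel ((hT g).trans (one_mul g).symm)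
    have hπ : ∀ x, (P φ).1 x = x := by
      intro x
      refine QuotientGroup.induction_on x fun g => ?_
      rw [← hcoset φ g, hτ, one_mul]
    refine AlgEquiv.ext fun v => ?_
    apply (EFk k F).injective
    funext x
    have h := hPE φ v x
    rw [hπ x, hτ x] at h
    simpa using h
  have hsurj : Function.Surjective ΘHom := by
    intro α
    set π := inducedPerm α with hπdef
    set τ : ((k ≃ₐ[ℚ] k) ⧸ F.fixingSubgroup) → (k ≃ₐ[ℚ] k) := fun x =>
      (α : Equiv.Perm (k ≃ₐ[ℚ] k)) (Quotient.out x) * (Quotient.out x)⁻¹ with hτdef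
    have hπτ : ∀ x, (QuotientGroup.mk ((α : Equiv.Perm _) (Quotient.out x)) :
        (k ≃ₐ[ℚ] k) ⧸ F.fixingSubgroup) = π x := by
      intro x
      rw [hπdef]
      conv_rhs => rw [← QuotientGroup.out_eq' x]
      rw [inducedPerm_mk]
    have htau : ∀ x (a : F), τ x (emb k F x a) = emb k F (π x) a := by
      intro x a
      rw [emb_eq k F (hπτ x) a]
      show ((α : Equiv.Perm _) (Quotient.out x) * (Quotient.out x)⁻¹)
        ((Quotient.out x) (a : k)) = (α : Equiv.Perm _) (Quotient.out x) (a : k)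
      rw [AlgEquiv.mul_apply, ← AlgEquiv.mul_apply ((Quotient.out x)⁻¹), inv_mul_cancel]
      rfl
    let Φα : (((k ≃ₐ[ℚ] k) ⧸ F.fixingSubgroup) → k) ≃ₐ[ℚ]
        (((k ≃ₐ[ℚ] k) ⧸ F.fixingSubgroup) → k) :=
      (AlgEquiv.piCongrRight fun x => τ x).trans (permAlgEquiv π)
    have hΦα : ∀ v z, Φα v z = τ (π.symm z) (v (π.symm z)) := fun v z => rfl
    let φ0 := (EFk k F).trans (Φα.trans (EFk k F).symm)
    have hcomm : ∀ a : F,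
        φ0.toRingEquiv (algebraMap F (F ⊗[ℚ] k) a) = algebraMap F (F ⊗[ℚ] k) a := by
      intro a
      have hfix : Φα (EFk k F (a ⊗ₜ[ℚ] (1 : k))) = EFk k F (a ⊗ₜ[ℚ] (1 : k)) := by
        funext z
        rw [hΦα, EFk_tmul, EFk_tmul, mul_one, mul_one, htau, π.apply_symm_apply]
      show (EFk k F).symm (Φα (EFk k F (a ⊗ₜ[ℚ] (1 : k)))) = a ⊗ₜ[ℚ] (1 : k)
      rw [hfix, (EFk k F).symm_apply_apply]
    let φF : (F ⊗[ℚ] k) ≃ₐ[F] (F ⊗[ℚ] k) := AlgEquiv.ofRingEquiv hcomm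
    have hPφF : P φF = (π, τ) := by
      refine (hPu φF (π, τ) ?_).symm
      intro v x
      have h1 : (AlgEquiv.autCongr (EFk k F)) (φF.restrictScalars ℚ) v = Φα v := by
        show EFk k F ((EFk k F).symm (Φα (EFk k F ((EFk k F).symm v)))) = Φα v
        rw [(EFk k F).apply_symm_apply, (EFk k F).apply_symm_apply]
      show (AlgEquiv.autCongr (EFk k F)) (φF.restrictScalars ℚ) v (π x) = τ x (v x)
      rw [h1, hΦα, π.symm_apply_apply]
    refine ⟨φF, ?_⟩
    apply Subtype.ext
    apply Equiv.ext
    intro g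
    show (P φF).2 (QuotientGroup.mk g) * g = (α : Equiv.Perm _) g
    rw [hPφF]
    have hg : (Quotient.out (QuotientGroup.mk g : (k ≃ₐ[ℚ] k) ⧸ F.fixingSubgroup))⁻¹ * g ∈
        F.fixingSubgroup := by
      rw [← QuotientGroup.eq, QuotientGroup.out_eq']
    calc τ (QuotientGroup.mk g) * g
        = (α : Equiv.Perm _) (Quotient.out (QuotientGroup.mk g :
            (k ≃ₐ[ℚ] k) ⧸ F.fixingSubgroup)) *
          ((Quotient.out (QuotientGroup.mk g : (k ≃ₐ[ℚ] k) ⧸ F.fixingSubgroup))⁻¹ * g) := by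
          rw [hτdef, mul_assoc]
      _ = (α : Equiv.Perm _) (Quotient.out (QuotientGroup.mk g :
            (k ≃ₐ[ℚ] k) ⧸ F.fixingSubgroup) *
          ((Quotient.out (QuotientGroup.mk g : (k ≃ₐ[ℚ] k) ⧸ F.fixingSubgroup))⁻¹ * g)) :=
          (α.2 _ _ hg).symm
      _ = (α : Equiv.Perm _) g := by rw [mul_inv_cancel_left]
  refine ⟨MulEquiv.ofBijective ΘHom ⟨hinj, hsurj⟩, ?_⟩
  intro s hs
  refine ⟨EFk k F, fun a b x => ?_, fun φ v x => ?_⟩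
  · rw [EFk_tmul, emb_eq k F (hs x) a]
  · have h1 : inducedPerm (MulEquiv.ofBijective ΘHom ⟨hinj, hsurj⟩ φ) x = (P φ).1 x := by
      conv_lhs => rw [← hs x]
      rw [inducedPerm_mk]
      show (QuotientGroup.mk ((P φ).2 (QuotientGroup.mk (s x)) * s x) :
        (k ≃ₐ[ℚ] k) ⧸ F.fixingSubgroup) = _
      rw [hcoset φ (s x), hs x]
    have h2 : ((MulEquiv.ofBijective ΘHom ⟨hinj, hsurj⟩ φ :
        plectic (k ≃ₐ[ℚ] k) F.fixingSubgroup) : Equiv.Perm (k ≃ₐ[ℚ] k)) (s x) * (s x)⁻¹ =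
        (P φ).2 x := by
      show (P φ).2 (QuotientGroup.mk (s x)) * s x * (s x)⁻¹ = _
      rw [hs x, mul_inv_cancel_right]
    rw [h1, h2]
    exact hPE φ v x
end
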